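/- arXiv:1601.00012 — 6 statements merged into one kernel-verified Lean document; each statement's English description precedes it below -/
import Mathlib

section
/- Let V be a real Hilbert space, K ⊆ V a nonempty closed convex subset, a : V × V → ℝ a continuous, symmetric, coercive bilinear form, and L : V → ℝ a continuous linear functional. Then there exists a unique u ∈ K such that a(u, v − u) ≥ L(v − u) for all v ∈ K. -/
open scoped RealInnerProductSpace

/-- Lions–Stampacchia: existence and uniqueness of the solution of an elliptic
variational inequality over a nonempty closed convex set. -/
theorem stmt1 {V : Type*} [NormedAddCommGroup V] [InnerProductSpace ℝ V] [CompleteSpace V]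
    (K : Set V) (hKne : K.Nonempty) (hKcl : IsClosed K) (hKcv : Convex ℝ K)
    (a : V →ₗ[ℝ] V →ₗ[ℝ] ℝ)
    (ha_cont : ∃ C : ℝ, ∀ u v : V, |a u v| ≤ C * ‖u‖ * ‖v‖)
    (ha_symm : ∀ u v : V, a u v = a v u)
    (lam : ℝ) (hlam : 0 < lam)
    (hcoer : ∀ v : V, lam * ‖v‖ ^ 2 ≤ a v v)
    (L : V →L[ℝ] ℝ) :
    ∃! u : V, u ∈ K ∧ ∀ v ∈ K, L (v - u) ≤ a u (v - u) := by
  obtain ⟨C, hC⟩ := ha_cont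
  -- the energy functional
  set φ : V → ℝ := fun v => a v v - 2 * L v with hφdef
  have hφcont : Continuous φ := by
    let A := LinearMap.mkContinuous₂ a C (by simpa using hC)
    have h : Continuous fun v : V => A v v :=
      A.continuous₂.comp (continuous_id.prodMk continuous_id)
    exact h.sub (continuous_const.mul L.continuous)
  -- lower bound
  have hlb : ∀ v : V, -(‖L‖ ^ 2 / lam) ≤ φ v := by
    intro v
    have h1 : lam * ‖v‖ ^ 2 ≤ a v v := hcoer v
    have h2 : L v ≤ ‖L‖ * ‖v‖ := le_trans (le_abs_self _) (L.le_opNorm v)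
    have h0 : lam * (‖L‖ ^ 2 / lam) = ‖L‖ ^ 2 := by field_simp
    show -(‖L‖ ^ 2 / lam) ≤ a v v - 2 * L v
    nlinarith [sq_nonneg (lam * ‖v‖ - ‖L‖), hlam]
  set S : Set ℝ := φ '' K with hSdef
  have hSne : S.Nonempty := hKne.image φ
  have hSbdd : BddBelow S := by
    refine ⟨-(‖L‖ ^ 2 / lam), ?_⟩
    rintro x ⟨v, -, rfl⟩
    exact hlb v
  set d : ℝ := sInf S with hddef
  have hd_le : ∀ v ∈ K, d ≤ φ v := fun v hv => csInf_le hSbdd ⟨v, hv, rfl⟩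
  -- minimizing sequence
  have hseq : ∀ n : ℕ, ∃ x, x ∈ K ∧ φ x < d + 1 / (n + 1) := by
    intro n
    have hpos : (0 : ℝ) < 1 / (n + 1) := by positivity
    obtain ⟨y, hyS, hy⟩ := exists_lt_of_csInf_lt hSne (by linarith : d < d + 1 / (n + 1))
    obtain ⟨x, hxK, rfl⟩ := hyS
    exact ⟨x, hxK, hy⟩
  choose u huK huφ using hseq
  -- parallelogram identity for φ
  have hpar : ∀ x y : V, φ x + φ y
      = 2 * φ ((2⁻¹ : ℝ) • (x + y)) + 2⁻¹ * a (x - y) (x - y) := by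
    intro x y
    simp only [hφdef, map_add, map_sub, map_smul, LinearMap.add_apply, LinearMap.sub_apply,
      LinearMap.smul_apply, smul_eq_mul]
    ring
  have hmidK : ∀ x ∈ K, ∀ y ∈ K, (2⁻¹ : ℝ) • (x + y) ∈ K := by
    intro x hx y hy
    have := hKcv hx hy (by norm_num : (0:ℝ) ≤ 2⁻¹) (by norm_num : (0:ℝ) ≤ 2⁻¹) (by norm_num)
    simpa [smul_add] using this
  -- Cauchy estimate
  have hkey : ∀ n m : ℕ, lam * ‖u n - u m‖ ^ 2 ≤ 2 * (1 / (n + 1) + 1 / (m + 1)) := by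
    intro n m
    have h1 := huφ n
    have h2 := huφ m
    have h3 := hd_le _ (hmidK _ (huK n) _ (huK m))
    have h4 := hpar (u n) (u m)
    have h5 := hcoer (u n - u m)
    linarith
  have hcauchy : CauchySeq u := by
    refine cauchySeq_of_le_tendsto_0 (fun N => Real.sqrt ((4 / lam) * (1 / (N + 1)))) ?_ ?_
    · intro n m N hn hm
      rw [dist_eq_norm]
      have h1 : ‖u n - u m‖ ^ 2 ≤ (4 / lam) * (1 / (N + 1)) := by
        have h2 := hkey n m
        have h3 : (1 : ℝ) / (n + 1) ≤ 1 / (N + 1) := by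
          apply one_div_le_one_div_of_le (by positivity)
          have : (N : ℝ) ≤ n := Nat.cast_le.mpr hn
          linarith
        have h4 : (1 : ℝ) / (m + 1) ≤ 1 / (N + 1) := by
          apply one_div_le_one_div_of_le (by positivity)
          have : (N : ℝ) ≤ m := Nat.cast_le.mpr hm
          linarith
        rw [div_mul_eq_mul_div, le_div_iff₀ hlam]
        nlinarith
      calc ‖u n - u m‖ = Real.sqrt (‖u n - u m‖ ^ 2) := by
            rw [Real.sqrt_sq (norm_nonneg _)]
        _ ≤ Real.sqrt ((4 / lam) * (1 / (N + 1))) := Real.sqrt_le_sqrt h1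
    · have : Filter.Tendsto (fun N : ℕ => (4 / lam) * (1 / (N + 1) : ℝ)) Filter.atTop (nhds 0) := by
        have := tendsto_one_div_add_atTop_nhds_zero_nat (𝕜 := ℝ)
        simpa using this.const_mul (4 / lam)
      have hcont : Filter.Tendsto Real.sqrt (nhds 0) (nhds 0) := by
        simpa using (Real.continuous_sqrt.tendsto 0)
      exact hcont.comp this
  obtain ⟨w, hw⟩ := cauchySeq_tendsto_of_complete hcauchy
  have hwK : w ∈ K := hKcl.mem_of_tendsto hw (Filter.Eventually.of_forall huK)
  -- φ w = d
  have hφw : φ w = d := by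
    have h1 : Filter.Tendsto (φ ∘ u) Filter.atTop (nhds (φ w)) :=
      (hφcont.tendsto w).comp hw
    have h2 : Filter.Tendsto (φ ∘ u) Filter.atTop (nhds d) := by
      apply tendsto_of_tendsto_of_tendsto_of_le_of_le (g := fun _ => d)
        (h := fun n : ℕ => d + 1 / (n + 1)) tendsto_const_nhds
      · have := tendsto_one_div_add_atTop_nhds_zero_nat (𝕜 := ℝ)
        simpa using tendsto_const_nhds.add this
      · exact fun n => hd_le _ (huK n)
      · exact fun n => le_of_lt (huφ n)
    exact tendsto_nhds_unique h1 h2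
  -- variational inequality
  have hVI : ∀ v ∈ K, L (v - w) ≤ a w (v - w) := by
    intro v hv
    set Δ := v - w with hΔ
    set A := a Δ Δ with hA
    set ε := a w Δ - L Δ with hε
    have hA0 : 0 ≤ A := le_trans (by positivity) (hcoer Δ)
    have hstep : ∀ t : ℝ, 0 < t → t ≤ 1 → -ε ≤ t / 2 * A := by
      intro t ht0 ht1
      have hmem : w + t • Δ ∈ K := by
        have := hKcv hwK hv (by linarith : (0:ℝ) ≤ 1 - t) (le_of_lt ht0) (by ring)
        have heq : (1 - t) • w + t • v = w + t • Δ := by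
          rw [hΔ]; rw [smul_sub]; module
        rwa [heq] at this
      have hφge : φ w ≤ φ (w + t • Δ) := hφw ▸ hd_le _ hmem
      have hexp : φ (w + t • Δ) = φ w + 2 * t * ε + t ^ 2 * A := by
        simp only [hφdef, hε, hA, map_add, map_smul, LinearMap.add_apply,
          LinearMap.smul_apply, smul_eq_mul]
        linear_combination (t : ℝ) * ha_symm Δ w
      rw [hexp] at hφge
      nlinarith
    have h1 : -ε ≤ 0 := by
      have h2 : ∀ δ : ℝ, 0 < δ → -ε ≤ 0 + δ := by
        intro δ hδ
        set t := min 1 (δ / (A + 1)) with htdef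
        have ht0 : 0 < t := lt_min one_pos (by positivity)
        have ht1 : t ≤ 1 := min_le_left _ _
        have h3 := hstep t ht0 ht1
        have h4 : t ≤ δ / (A + 1) := min_le_right _ _
        have h5 : t * A ≤ δ / (A + 1) * A :=
          mul_le_mul_of_nonneg_right h4 hA0
        have h6 : δ / (A + 1) * A ≤ δ := by
          rw [div_mul_eq_mul_div, div_le_iff₀ (by positivity)]
          nlinarith
        linarith
      exact le_of_forall_pos_le_add h2
    rw [hε] at h1
    linarith
  -- uniqueness
  refine ⟨w, ⟨hwK, hVI⟩, ?_⟩
  rintro w' ⟨hw'K, hVI'⟩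
  have h1 := hVI' w hwK
  have h2 := hVI w' hw'K
  have h3 : a (w - w') (w - w') ≤ 0 := by
    have e0 : L (w - w') + L (w' - w) = 0 := by
      rw [← map_add]; simp
    have e1 : a w' (w - w') - a w (w - w') = -(a (w - w') (w - w')) := by
      simp only [map_sub, LinearMap.sub_apply]; ring
    have e2 : a w (w' - w) = -(a w (w - w')) := by
      simp only [map_sub]; ring
    linarith
  have h5 := hcoer (w - w')
  have h6 : ‖w - w'‖ ^ 2 ≤ 0 := by nlinarith
  have h7 : w - w' = 0 := by
    have := norm_nonneg (w - w')
    have : ‖w - w'‖ = 0 := by nlinarith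
    simpa using this
  have := sub_eq_zero.mp h7
  exact this.symm
end

section
/- Let V be a real Hilbert space, H a real Hilbert space with a continuous embedding j : V → H of norm ≤ c, K ⊆ V nonempty closed convex, and a a bilinear continuous coercive form on V with coercivity constant λ > 0. For g ∈ H, let u_g ∈ K denote the unique solution of the variational inequality a(u_g, v − u_g) ≥ ⟪g, j(v − u_g)⟫_H + L(v − u_g) for all v ∈ K, where L is a fixed continuous linear functional. Then for all g₁, g₂ ∈ H, ‖u_{g₂} − u_{g₁}‖_V ≤ (c/λ)‖g₂ − g₁‖_H. In particular the solution map g ↦ u_g is Lipschitz continuous. -/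
open scoped RealInnerProductSpace

/-- Lipschitz dependence of the variational inequality solution on the source term:
`‖u_{g₂} − u_{g₁}‖_V ≤ (c/λ) ‖g₂ − g₁‖_H`. -/
theorem stmt2 {V H : Type*}
    [NormedAddCommGroup V] [InnerProductSpace ℝ V] [CompleteSpace V]
    [NormedAddCommGroup H] [InnerProductSpace ℝ H] [CompleteSpace H]
    (j : V →L[ℝ] H) (c : ℝ) (hc : 0 < c) (hj : ∀ v : V, ‖j v‖ ≤ c * ‖v‖)
    (K : Set V) (hKne : K.Nonempty) (hKcl : IsClosed K) (hKcv : Convex ℝ K)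
    (a : V →ₗ[ℝ] V →ₗ[ℝ] ℝ)
    (ha_cont : ∃ C : ℝ, ∀ u v : V, |a u v| ≤ C * ‖u‖ * ‖v‖)
    (lam : ℝ) (hlam : 0 < lam)
    (hcoer : ∀ v : V, lam * ‖v‖ ^ 2 ≤ a v v)
    (L : V →L[ℝ] ℝ)
    (u : H → V)
    (hu : ∀ g : H, u g ∈ K ∧
      ∀ v ∈ K, ⟪g, j (v - u g)⟫ + L (v - u g) ≤ a (u g) (v - u g)) :
    ∀ g₁ g₂ : H, ‖u g₂ - u g₁‖ ≤ (c / lam) * ‖g₂ - g₁‖ := by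
  intro g₁ g₂
  obtain ⟨hm1, h1⟩ := hu g₁
  obtain ⟨hm2, h2⟩ := hu g₂
  set w := u g₂ - u g₁ with hw
  have A := h1 (u g₂) hm2
  have B := h2 (u g₁) hm1
  have hneg : u g₁ - u g₂ = -w := by simp [hw]
  rw [hneg] at B
  -- from A + B: a(w,w) ≤ ⟪g₂ - g₁, j w⟫
  have key : (a w) w ≤ ⟪g₂ - g₁, j w⟫ := by
    have hA : ⟪g₁, j w⟫ + L w ≤ (a (u g₁)) w := A
    have hB : ⟪g₂, j (-w)⟫ + L (-w) ≤ (a (u g₂)) (-w) := B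
    have hB' : -⟪g₂, j w⟫ - L w ≤ -(a (u g₂)) w := by
      simpa [inner_neg_right, map_neg] using hB
    have hsum := add_le_add hA hB'
    have hdiff : (a (u g₁)) w + -(a (u g₂)) w = -((a w) w) := by
      have : (a (u g₁ - u g₂)) w = (a (u g₁)) w - (a (u g₂)) w := by
        simp [map_sub]
      rw [hneg] at this
      simp only [map_neg, LinearMap.neg_apply] at this
      linarith
    rw [inner_sub_left]
    linarith
  have hbound : (a w) w ≤ c * ‖g₂ - g₁‖ * ‖w‖ := by
    calc (a w) w ≤ ⟪g₂ - g₁, j w⟫ := key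
      _ ≤ ‖g₂ - g₁‖ * ‖j w‖ := real_inner_le_norm _ _
      _ ≤ ‖g₂ - g₁‖ * (c * ‖w‖) := by
          exact mul_le_mul_of_nonneg_left (hj w) (norm_nonneg _)
      _ = c * ‖g₂ - g₁‖ * ‖w‖ := by ring
  have hco := hcoer w
  rcases eq_or_lt_of_le (norm_nonneg w) with h0 | h0
  · rw [← h0]
    positivity
  · have : lam * ‖w‖ ≤ c * ‖g₂ - g₁‖ := by
      have h2 : lam * ‖w‖ * ‖w‖ ≤ c * ‖g₂ - g₁‖ * ‖w‖ := by
        nlinarith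
      exact le_of_mul_le_mul_right h2 h0
    rw [div_mul_eq_mul_div, le_div_iff₀ hlam]
    linarith
end

section
/- Let V be a real Hilbert space, a_α a continuous symmetric bilinear form on V that is coercive with constant λ_α > 0, K₊ ⊆ V closed convex, and K_h ⊆ K₊ a closed convex subset. Let u ∈ K₊ solve a_α(u, v − u) ≥ L(v − u) for all v ∈ K₊, and let u_h ∈ K_h solve a_α(u_h, v_h − u_h) ≥ L(v_h − u_h) for all v_h ∈ K_h, where L ∈ V*. Then for any w_h ∈ K_h, λ_α‖u_h − u‖² ≤ a_α(u_h − u, u_h − u) ≤ a_α(u_h, w_h − u) − L(w_h − u). Consequently, if there exist w_h ∈ K_h with ‖w_h − u‖ ≤ C h^{r−1} and ‖u_h‖ bounded uniformly, then ‖u_h − u‖ ≤ C' h^{(r−1)/2}. -/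
/-- Falk-type error estimate: the Céa–Falk inequality for variational inequalities,
and the resulting rate `‖u_h − u‖ ≤ C' h^{(r−1)/2}`. -/
theorem stmt10 {V : Type*} [NormedAddCommGroup V] [InnerProductSpace ℝ V] [CompleteSpace V]
    (aα : V →ₗ[ℝ] V →ₗ[ℝ] ℝ)
    (ha_cont : ∃ C : ℝ, ∀ u v : V, |aα u v| ≤ C * ‖u‖ * ‖v‖)
    (ha_symm : ∀ u v : V, aα u v = aα v u)
    (lamα : ℝ) (hlam : 0 < lamα)
    (hcoer : ∀ v : V, lamα * ‖v‖ ^ 2 ≤ aα v v)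
    (Kp : Set V) (hKpne : Kp.Nonempty) (hKpcl : IsClosed Kp) (hKpcv : Convex ℝ Kp)
    (L : V →L[ℝ] ℝ)
    (u : V) (hu : u ∈ Kp ∧ ∀ v ∈ Kp, L (v - u) ≤ aα u (v - u))
    (Kh : ℝ → Set V)
    (hKh : ∀ h : ℝ, 0 < h →
      (Kh h).Nonempty ∧ IsClosed (Kh h) ∧ Convex ℝ (Kh h) ∧ Kh h ⊆ Kp)
    (uh : ℝ → V)
    (huh : ∀ h : ℝ, 0 < h →
      uh h ∈ Kh h ∧ ∀ v ∈ Kh h, L (v - uh h) ≤ aα (uh h) (v - uh h))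
    (r : ℝ) (hr1 : 1 < r) (hr2 : r ≤ 2) :
    (∀ h : ℝ, 0 < h → ∀ w ∈ Kh h,
        lamα * ‖uh h - u‖ ^ 2 ≤ aα (uh h - u) (uh h - u) ∧
        aα (uh h - u) (uh h - u) ≤ aα (uh h) (w - u) - L (w - u)) ∧
    (∀ C : ℝ, 0 < C → (∀ h : ℝ, 0 < h → ‖uh h‖ ≤ C) →
      (∀ h : ℝ, 0 < h → ∃ w ∈ Kh h, ‖w - u‖ ≤ C * h ^ (r - 1)) →
      ∃ C' : ℝ, 0 < C' ∧ ∀ h : ℝ, 0 < h → ‖uh h - u‖ ≤ C' * h ^ ((r - 1) / 2)) := by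
  obtain ⟨Ca, hCa⟩ := ha_cont
  have key : ∀ h : ℝ, 0 < h → ∀ w ∈ Kh h,
      lamα * ‖uh h - u‖ ^ 2 ≤ aα (uh h - u) (uh h - u) ∧
      aα (uh h - u) (uh h - u) ≤ aα (uh h) (w - u) - L (w - u) := by
    intro h hh w hw
    obtain ⟨huhK, huhVI⟩ := huh h hh
    obtain ⟨-, -, -, hsub⟩ := hKh h hh
    refine ⟨hcoer _, ?_⟩
    have h1 : L (uh h - u) ≤ aα u (uh h - u) := hu.2 _ (hsub huhK)
    have h2 : L (w - uh h) ≤ aα (uh h) (w - uh h) := huhVI _ hw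
    have e1 : aα (uh h - u) (uh h - u)
        = aα (uh h) (w - u) - aα (uh h) (w - uh h) - aα u (uh h - u) := by
      simp only [map_sub, LinearMap.sub_apply]
      ring
    have e2 : L (w - u) = L (w - uh h) + L (uh h - u) := by
      rw [← map_add]; congr 1; abel
    rw [e1, e2]; linarith
  refine ⟨key, ?_⟩
  intro C hC hub happ
  set M : ℝ := (|Ca| * C + ‖L‖) * C / lamα with hM
  have hM0 : 0 ≤ M := by
    apply div_nonneg _ hlam.le
    positivity
  refine ⟨max (Real.sqrt M) 1, lt_of_lt_of_le one_pos (le_max_right _ _), ?_⟩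
  intro h hh
  obtain ⟨w, hw, hwb⟩ := happ h hh
  have hineq := key h hh w hw
  have hbound : lamα * ‖uh h - u‖ ^ 2 ≤ (|Ca| * C + ‖L‖) * (C * h ^ (r - 1)) := by
    have h1 : aα (uh h) (w - u) ≤ |Ca| * C * ‖w - u‖ := by
      calc aα (uh h) (w - u) ≤ |aα (uh h) (w - u)| := le_abs_self _
        _ ≤ Ca * ‖uh h‖ * ‖w - u‖ := hCa _ _
        _ ≤ |Ca| * C * ‖w - u‖ := by
            have hb := hub h hh
            have hn : (0:ℝ) ≤ ‖w - u‖ := norm_nonneg _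
            have hx : Ca * ‖uh h‖ ≤ |Ca| * C := by
              nlinarith [abs_nonneg Ca, le_abs_self Ca, norm_nonneg (uh h)]
            exact mul_le_mul_of_nonneg_right hx hn
    have h2 : -L (w - u) ≤ ‖L‖ * ‖w - u‖ := by
      calc -L (w - u) ≤ |L (w - u)| := neg_le_abs _
        _ ≤ ‖L‖ * ‖w - u‖ := L.le_opNorm _
    have hwn : (0:ℝ) ≤ ‖w - u‖ := norm_nonneg _
    nlinarith [hineq.1, hineq.2,
      mul_le_mul_of_nonneg_left hwb (by positivity : (0:ℝ) ≤ |Ca| * C + ‖L‖)]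
  have hsq : ‖uh h - u‖ ^ 2 ≤ M * h ^ (r - 1) := by
    rw [hM, div_mul_eq_mul_div, le_div_iff₀ hlam]
    nlinarith
  have hrw : Real.sqrt (h ^ (r - 1)) = h ^ ((r - 1) / 2) := by
    rw [Real.sqrt_eq_rpow, ← Real.rpow_mul hh.le]
    ring_nf
  calc ‖uh h - u‖ = Real.sqrt (‖uh h - u‖ ^ 2) := (Real.sqrt_sq (norm_nonneg _)).symm
    _ ≤ Real.sqrt (M * h ^ (r - 1)) := Real.sqrt_le_sqrt hsq
    _ = Real.sqrt M * h ^ ((r - 1) / 2) := by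
        rw [Real.sqrt_mul hM0, hrw]
    _ ≤ max (Real.sqrt M) 1 * h ^ ((r - 1) / 2) :=
        mul_le_mul_of_nonneg_right (le_max_left _ _) (Real.rpow_nonneg hh.le _)
end

section
/- Let V be a real Hilbert space, a and ⟪·,·⟫_R continuous symmetric positive semidefinite bilinear forms with a₁ = a + ⟪·,·⟫_R coercive with constant λ₁ > 0. Fix L ∈ V* and b-compatible closed convex sets K₊ ⊇ K := {v ∈ K₊ : ⟪v − b₀, v − b₀⟫_R = 0} (nonempty), where b₀ ∈ K₊. For α > 1, let u_α ∈ K₊ solve a(u_α, v − u_α) + α⟪u_α − b₀, v − u_α⟫_R ≥ L(v − u_α) for all v ∈ K₊. Then there is a constant C independent of α such that ⟪u_α − b₀, u_α − b₀⟫_R ≤ C/(α − 1) and ‖u_α‖_V ≤ C for all α > 1. -/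
open Filter

/-- Uniform a priori estimates for the penalized variational inequalities:
`R(u_α−b₀, u_α−b₀) ≤ C/(α−1)` and `‖u_α‖ ≤ C` for all `α > 1`. -/
theorem stmt13 {V : Type*} [NormedAddCommGroup V] [InnerProductSpace ℝ V] [CompleteSpace V]
    (a R : V →ₗ[ℝ] V →ₗ[ℝ] ℝ)
    (ha_cont : ∃ C : ℝ, ∀ u v : V, |a u v| ≤ C * ‖u‖ * ‖v‖)
    (ha_symm : ∀ u v : V, a u v = a v u)
    (hR_cont : ∃ C : ℝ, ∀ u v : V, |R u v| ≤ C * ‖u‖ * ‖v‖)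
    (hR_symm : ∀ u v : V, R u v = R v u)
    (ha_pos : ∀ v : V, 0 ≤ a v v) (hR_pos : ∀ v : V, 0 ≤ R v v)
    (lam1 : ℝ) (hlam1 : 0 < lam1)
    (hcoer : ∀ v : V, lam1 * ‖v‖ ^ 2 ≤ a v v + R v v)
    (L : V →L[ℝ] ℝ)
    (Kp : Set V) (hKpcl : IsClosed Kp) (hKpcv : Convex ℝ Kp)
    (b₀ : V) (hb₀ : b₀ ∈ Kp)
    (hKne : {v ∈ Kp | R (v - b₀) (v - b₀) = 0}.Nonempty)
    (u : ℝ → V)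
    (hu : ∀ α : ℝ, 1 < α → u α ∈ Kp ∧
      ∀ v ∈ Kp, L (v - u α) ≤ a (u α) (v - u α) + α * R (u α - b₀) (v - u α)) :
    ∃ C : ℝ, 0 < C ∧ ∀ α : ℝ, 1 < α →
      R (u α - b₀) (u α - b₀) ≤ C / (α - 1) ∧ ‖u α‖ ≤ C := by

  obtain ⟨Ca, hCa⟩ := ha_cont
  set M : ℝ := ‖L‖ + |Ca| * ‖b₀‖ with hM
  have hM0 : 0 ≤ M := by positivity
  clear_value M
  refine ⟨max (M ^ 2 / lam1) (M / lam1 + ‖b₀‖) + 1, by positivity, ?_⟩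
  intro α hα
  obtain ⟨huK, hineq⟩ := hu α hα
  have h := hineq b₀ hb₀
  set w : V := u α - b₀ with hw
  clear_value w
  have hbw : b₀ - u α = -w := by simp [hw]
  have key : a w w + α * R w w ≤ M * ‖w‖ := by
    have huw : u α = w + b₀ := by simp [hw]
    rw [hbw, huw] at h
    simp only [map_neg, map_add, LinearMap.add_apply, LinearMap.neg_apply] at h
    have h1 : (L : V → ℝ) w ≤ ‖L‖ * ‖w‖ := by
      calc (L : V → ℝ) w ≤ ‖(L : V → ℝ) w‖ := le_abs_self _
        _ ≤ ‖L‖ * ‖w‖ := L.le_opNorm w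
    have h2 : -(a b₀ w) ≤ |Ca| * ‖b₀‖ * ‖w‖ := by
      have h4 := hCa b₀ w
      have h3 : Ca * ‖b₀‖ * ‖w‖ ≤ |Ca| * ‖b₀‖ * ‖w‖ :=
        mul_le_mul_of_nonneg_right
          (mul_le_mul_of_nonneg_right (le_abs_self Ca) (norm_nonneg b₀)) (norm_nonneg w)
      nlinarith [neg_abs_le (a b₀ w)]
    have hMw : M * ‖w‖ = ‖L‖ * ‖w‖ + |Ca| * ‖b₀‖ * ‖w‖ := by rw [hM]; ring
    have h5 : α * -((R w) w) = -(α * (R w) w) := by ring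
    rw [h5] at h
    linarith
  have hRw := hR_pos w
  have hcw := hcoer w
  have hα1 : 0 < α - 1 := by linarith
  have key2 : lam1 * ‖w‖ ^ 2 + (α - 1) * R w w ≤ M * ‖w‖ := by nlinarith
  have hwb : ‖w‖ ≤ M / lam1 := by
    rcases (norm_nonneg w).eq_or_lt with h0 | h0
    · rw [← h0]; positivity
    · rw [le_div_iff₀ hlam1]
      nlinarith [mul_nonneg hα1.le hRw, mul_pos h0 h0]
  constructor
  · rw [le_div_iff₀ hα1]
    have hstep : (α - 1) * R w w ≤ M * (M / lam1) := by
      have hq1 : M * ‖w‖ ≤ M * (M / lam1) := mul_le_mul_of_nonneg_left hwb hM0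
      have hq2 : 0 ≤ lam1 * ‖w‖ ^ 2 := mul_nonneg hlam1.le (sq_nonneg ‖w‖)
      linarith
    have hMM : M * (M / lam1) ≤ M ^ 2 / lam1 := by
      rw [pow_two, mul_div_assoc]
    calc R w w * (α - 1) = (α - 1) * R w w := by ring
      _ ≤ M ^ 2 / lam1 := le_trans hstep hMM
      _ ≤ max (M ^ 2 / lam1) (M / lam1 + ‖b₀‖) + 1 := by
          have := le_max_left (M ^ 2 / lam1) (M / lam1 + ‖b₀‖); linarith
  · have hnb : ‖u α‖ ≤ ‖w‖ + ‖b₀‖ := by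
      have huw : u α = w + b₀ := by simp [hw]
      rw [huw]; exact norm_add_le _ _
    have := le_max_right (M ^ 2 / lam1) (M / lam1 + ‖b₀‖)
    linarith
end

section
/- Under the setup of the previous context, the solutions u_α of the penalized variational inequalities converge strongly in V, as α → ∞, to the unique solution u ∈ K of the limit variational inequality a(u, v − u) ≥ L(v − u) for all v ∈ K. -/
open Filter

set_option maxHeartbeats 1000000 in
/-- Convergence of the penalized solutions `u_α` to the solution `u` of the limit
variational inequality on `K = {v ∈ K₊ : R(v−b₀,v−b₀) = 0}`, as `α → ∞`. -/
theorem stmt14 {V H : Type*}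
    [NormedAddCommGroup V] [InnerProductSpace ℝ V] [CompleteSpace V]
    [NormedAddCommGroup H] [InnerProductSpace ℝ H] [CompleteSpace H]
    (j : V →L[ℝ] H) (hjcompact : IsCompactOperator j)
    (a R : V →ₗ[ℝ] V →ₗ[ℝ] ℝ)
    (ha_cont : ∃ C : ℝ, ∀ u v : V, |a u v| ≤ C * ‖u‖ * ‖v‖)
    (ha_symm : ∀ u v : V, a u v = a v u)
    (hR_cont : ∃ C : ℝ, ∀ u v : V, |R u v| ≤ C * ‖u‖ * ‖v‖)
    (hR_symm : ∀ u v : V, R u v = R v u)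
    (ha_pos : ∀ v : V, 0 ≤ a v v) (hR_pos : ∀ v : V, 0 ≤ R v v)
    (lam1 : ℝ) (hlam1 : 0 < lam1)
    (hcoer : ∀ v : V, lam1 * ‖v‖ ^ 2 ≤ a v v + R v v)
    (L : V →L[ℝ] ℝ)
    (Kp : Set V) (hKpcl : IsClosed Kp) (hKpcv : Convex ℝ Kp)
    (b₀ : V) (hb₀ : b₀ ∈ Kp)
    (K : Set V) (hK : K = {v ∈ Kp | R (v - b₀) (v - b₀) = 0}) (hKne : K.Nonempty)
    (u : ℝ → V)
    (hu : ∀ α : ℝ, 1 < α → u α ∈ Kp ∧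
      ∀ v ∈ Kp, L (v - u α) ≤ a (u α) (v - u α) + α * R (u α - b₀) (v - u α))
    (ulim : V)
    (hulim : ulim ∈ K ∧ ∀ v ∈ K, L (v - ulim) ≤ a ulim (v - ulim))
    (huniq : ∀ w : V, w ∈ K ∧ (∀ v ∈ K, L (v - w) ≤ a w (v - w)) → w = ulim) :
    Tendsto u atTop (nhds ulim) := by
  classical
  obtain ⟨Ca, hCa⟩ := ha_cont
  obtain ⟨Cr, hCr⟩ := hR_cont
  obtain ⟨hul_mem, hul_vi⟩ := hulim
  have hulK : ulim ∈ Kp ∧ R (ulim - b₀) (ulim - b₀) = 0 := by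
    rw [hK] at hul_mem; exact hul_mem
  -- expansions for symmetric bilinear forms
  have expA : ∀ x e : V, a (x + e) (x + e) = a x x + 2 * a x e + a e e := by
    intro x e
    have hs := ha_symm x e
    simp only [map_add, LinearMap.add_apply]
    linarith
  have expR : ∀ x e : V, R (x + e) (x + e) = R x x + 2 * R x e + R e e := by
    intro x e
    have hs := hR_symm x e
    simp only [map_add, LinearMap.add_apply]
    linarith
  have expRsub : ∀ x y : V, R (x - y) (x - y) = R x x - R x y - R y x + R y y := by
    intro x y
    simp only [map_sub, LinearMap.sub_apply]
    ring
  -- null vectors of the psd form R annihilate everything with null norm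
  have Rnull : ∀ x y : V, R x x = 0 → R y y = 0 → R x y = 0 := by
    intro x y hx hy
    have h1 : 0 ≤ R (x + y) (x + y) := hR_pos _
    have h2 : 0 ≤ R (x - y) (x - y) := hR_pos _
    have hs := hR_symm x y
    rw [expR] at h1
    simp only [map_sub, LinearMap.sub_apply] at h2
    linarith
  -- the penalized energy functional
  obtain ⟨J, hJdef⟩ : ∃ J : ℝ → V → ℝ,
      J = fun α v => a v v / 2 + α / 2 * R (v - b₀) (v - b₀) - L v := ⟨_, rfl⟩
  obtain ⟨M, hMdef⟩ : ∃ M : ℝ, M = a ulim ulim / 2 - L ulim := ⟨_, rfl⟩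
  -- key: u α minimizes J α over Kp, with a strong-convexity gap
  have keyA : ∀ α : ℝ, 1 < α → ∀ v ∈ Kp,
      J α (u α) + lam1 / 2 * ‖v - u α‖ ^ 2 ≤ J α v := by
    intro α hα v hv
    obtain ⟨hum, hVI⟩ := hu α hα
    have hvi := hVI v hv
    have h1 : a v v = a (u α) (u α) + 2 * a (u α) (v - u α) + a (v - u α) (v - u α) := by
      have h := expA (u α) (v - u α)
      rwa [add_sub_cancel] at h
    have h2 : R (v - b₀) (v - b₀) = R (u α - b₀) (u α - b₀)
        + 2 * R (u α - b₀) (v - u α) + R (v - u α) (v - u α) := by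
      have h := expR (u α - b₀) (v - u α)
      have he : u α - b₀ + (v - u α) = v - b₀ := by abel
      rwa [he] at h
    have h2' : α / 2 * R (v - b₀) (v - b₀) = α / 2 * R (u α - b₀) (u α - b₀)
        + α * R (u α - b₀) (v - u α) + α / 2 * R (v - u α) (v - u α) := by
      rw [h2]; ring
    have hL : L v = L (u α) + L (v - u α) := by
      have h := L.map_sub v (u α); linarith
    have hae := ha_pos (v - u α)
    have hre := hR_pos (v - u α)
    have hco := hcoer (v - u α)
    have hprod : 0 ≤ (α - 1) * R (v - u α) (v - u α) :=
      mul_nonneg (by linarith) hre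
    simp only [hJdef]
    nlinarith [hvi, h1, h2', hL, hco, hprod]
  -- monotonicity with a quantitative gap
  have key2 : ∀ p q : ℝ, 1 < p → p ≤ q →
      J p (u p) + lam1 / 2 * ‖u q - u p‖ ^ 2 ≤ J q (u q) := by
    intro p q hp hpq
    have hq : 1 < q := lt_of_lt_of_le hp hpq
    have hmem := (hu q hq).1
    have h1 := keyA p hp (u q) hmem
    have h2 : J p (u q) ≤ J q (u q) := by
      simp only [hJdef]
      nlinarith [mul_nonneg (sub_nonneg.mpr hpq) (hR_pos (u q - b₀))]
    linarith
  have hgap : (0:ℝ) ≤ lam1 / 2 := le_of_lt (half_pos hlam1)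
  have hmono : ∀ p q : ℝ, 1 < p → p ≤ q → J p (u p) ≤ J q (u q) := by
    intro p q hp hpq
    have h := key2 p q hp hpq
    nlinarith [mul_nonneg hgap (sq_nonneg ‖u q - u p‖)]
  -- upper bound by the limit energy
  have hbddM : ∀ α : ℝ, 1 < α → J α (u α) ≤ M := by
    intro α hα
    have h1 := keyA α hα ulim hulK.1
    have h2 : J α ulim = M := by
      simp only [hJdef, hMdef, hulK.2]; ring
    nlinarith [mul_nonneg hgap (sq_nonneg ‖ulim - u α‖)]
  -- M is a lower bound of J α on K
  have hMmin : ∀ v, v ∈ K → ∀ α : ℝ, M ≤ J α v := by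
    intro v hv α
    have hvK := hv
    rw [hK] at hvK
    obtain ⟨hvp, hv0⟩ := hvK
    have h1 : a v v = a ulim ulim + 2 * a ulim (v - ulim) + a (v - ulim) (v - ulim) := by
      have h := expA ulim (v - ulim)
      rwa [add_sub_cancel] at h
    have h2 := hul_vi v hv
    have h3 := ha_pos (v - ulim)
    have hL : L v = L ulim + L (v - ulim) := by
      have h := L.map_sub v ulim; linarith
    simp only [hJdef, hMdef, hv0]
    linarith
  -- the minimum value function, made globally monotone
  obtain ⟨m, hmdef⟩ : ∃ m : ℝ → ℝ, m = fun α => J (max α 2) (u (max α 2)) := ⟨_, rfl⟩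
  have hm_mono : Monotone m := by
    intro p q hpq
    simp only [hmdef]
    exact hmono _ _ (lt_of_lt_of_le one_lt_two (le_max_right _ _)) (max_le_max hpq le_rfl)
  have hm_bdd : BddAbove (Set.range m) := by
    refine ⟨M, ?_⟩
    rintro x ⟨α, rfl⟩
    simp only [hmdef]
    exact hbddM _ (lt_of_lt_of_le one_lt_two (le_max_right _ _))
  have hm_tend : Tendsto m atTop (nhds (⨆ α, m α)) := tendsto_atTop_ciSup hm_mono hm_bdd
  obtain ⟨S, hSdef⟩ : ∃ S : ℝ, S = ⨆ α, m α := ⟨_, rfl⟩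
  rw [← hSdef] at hm_tend
  have hm_le : ∀ α, m α ≤ S := by
    intro α; rw [hSdef]; exact le_ciSup hm_bdd α
  -- u is Cauchy
  have hcauchy : CauchySeq u := by
    rw [Metric.cauchySeq_iff]
    intro ε hε
    have hδ0 : 0 < lam1 / 2 * (ε ^ 2 / 2) := by positivity
    have hδ : S - lam1 / 2 * (ε ^ 2 / 2) < S := by linarith
    obtain ⟨N, hN⟩ := (eventually_atTop).mp (hm_tend.eventually (eventually_gt_nhds hδ))
    refine ⟨max N 2, ?_⟩
    have key3 : ∀ x y : ℝ, max N 2 ≤ x → x ≤ y → dist (u x) (u y) < ε := by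
      intro x y hx hxy
      have hx2 : (2:ℝ) ≤ x := le_trans (le_max_right _ _) hx
      have hxN : N ≤ x := le_trans (le_max_left _ _) hx
      have hx1 : 1 < x := by linarith
      have hy2 : (2:ℝ) ≤ y := le_trans hx2 hxy
      have hmx : m x = J x (u x) := by
        simp only [hmdef]; rw [max_eq_left hx2]
      have hmy : m y = J y (u y) := by
        simp only [hmdef]; rw [max_eq_left hy2]
      have h1 := key2 x y hx1 hxy
      have h2 := hN x hxN
      have h3 := hm_le y
      rw [hmx] at h2
      rw [hmy] at h3
      have h4 : lam1 / 2 * ‖u y - u x‖ ^ 2 < lam1 / 2 * (ε ^ 2 / 2) := by linarith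
      have h5 : ‖u y - u x‖ ^ 2 < ε ^ 2 / 2 := by
        have h := (mul_lt_mul_iff_right₀ (half_pos hlam1)).mp h4
        linarith
      have h6 : ‖u y - u x‖ < ε := by
        nlinarith [norm_nonneg (u y - u x)]
      rw [dist_eq_norm, norm_sub_rev]
      exact h6
    intro p hp q hq
    rcases le_total p q with h | h
    · exact key3 p q hp h
    · rw [dist_comm]; exact key3 q p hq h
  obtain ⟨w, hw⟩ := cauchySeq_tendsto_of_complete hcauchy
  -- continuity of the quadratic forms
  have hCa' : ∀ x y : V, ‖a x y‖ ≤ Ca * ‖x‖ * ‖y‖ := by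
    intro x y; rw [Real.norm_eq_abs]; exact hCa x y
  have hCr' : ∀ x y : V, ‖R x y‖ ≤ Cr * ‖x‖ * ‖y‖ := by
    intro x y; rw [Real.norm_eq_abs]; exact hCr x y
  have haq : Continuous fun v : V => a v v := by
    let a' : V →L[ℝ] V →L[ℝ] ℝ := LinearMap.mkContinuous₂ a Ca hCa'
    have h : Continuous fun v : V => a' v v :=
      a'.isBoundedBilinearMap.continuous.comp (continuous_id.prodMk continuous_id)
    exact h
  have hRq : Continuous fun v : V => R v v := by
    let R' : V →L[ℝ] V →L[ℝ] ℝ := LinearMap.mkContinuous₂ R Cr hCr'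
    have h : Continuous fun v : V => R' v v :=
      R'.isBoundedBilinearMap.continuous.comp (continuous_id.prodMk continuous_id)
    exact h
  have htsub : Tendsto (fun α : ℝ => u α - b₀) atTop (nhds (w - b₀)) :=
    hw.sub tendsto_const_nhds
  have htA : Tendsto (fun α : ℝ => a (u α) (u α)) atTop (nhds (a w w)) :=
    (haq.tendsto w).comp hw
  have htP : Tendsto (fun α : ℝ => R (u α - b₀) (u α - b₀)) atTop
      (nhds (R (w - b₀) (w - b₀))) := (hRq.tendsto (w - b₀)).comp htsub
  have htL : Tendsto (fun α : ℝ => L (u α)) atTop (nhds (L w)) :=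
    (L.continuous.tendsto w).comp hw
  -- w ∈ Kp
  have hwKp : w ∈ Kp := by
    apply hKpcl.mem_of_tendsto hw
    filter_upwards [eventually_ge_atTop (2:ℝ)] with α hα
    exact (hu α (by linarith)).1
  -- the penalization term vanishes in the limit
  have hbound : ∀ᶠ α : ℝ in atTop,
      R (u α - b₀) (u α - b₀) ≤ 2 * (M + ‖L‖ * (‖w‖ + 1)) / α := by
    filter_upwards [eventually_ge_atTop (2:ℝ), Metric.tendsto_nhds.mp hw 1 one_pos]
      with α hα hd
    have hα1 : 1 < α := by linarith
    have hαpos : 0 < α := by linarith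
    have hJb := hbddM α hα1
    have hnorm : ‖u α‖ ≤ ‖w‖ + 1 := by
      have h1 : ‖u α - w‖ < 1 := by rwa [dist_eq_norm] at hd
      have h2 : ‖u α‖ - ‖w‖ ≤ ‖u α - w‖ := norm_sub_norm_le _ _
      linarith
    have hLb : L (u α) ≤ ‖L‖ * (‖w‖ + 1) := by
      have h1 : |L (u α)| ≤ ‖L‖ * ‖u α‖ := by
        have h := L.le_opNorm (u α); rwa [Real.norm_eq_abs] at h
      have h2 : ‖L‖ * ‖u α‖ ≤ ‖L‖ * (‖w‖ + 1) :=
        mul_le_mul_of_nonneg_left hnorm (norm_nonneg _)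
      calc L (u α) ≤ |L (u α)| := le_abs_self _
        _ ≤ ‖L‖ * ‖u α‖ := h1
        _ ≤ _ := h2
    have ha0 := ha_pos (u α)
    simp only [hJdef] at hJb
    rw [le_div_iff₀ hαpos]
    linarith [hJb, hLb, ha0]
  have hRw0 : R (w - b₀) (w - b₀) = 0 := by
    have htzero : Tendsto (fun α : ℝ => 2 * (M + ‖L‖ * (‖w‖ + 1)) / α) atTop (nhds 0) :=
      tendsto_const_nhds.div_atTop tendsto_id
    have hle : R (w - b₀) (w - b₀) ≤ 0 := le_of_tendsto_of_tendsto htP htzero hbound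
    exact le_antisymm hle (hR_pos _)
  have hwK : w ∈ K := by rw [hK]; exact ⟨hwKp, hRw0⟩
  -- J(w) ≤ M
  have hJw : a w w / 2 - L w ≤ M := by
    have ht : Tendsto (fun α : ℝ => a (u α) (u α) / 2 - L (u α)) atTop
        (nhds (a w w / 2 - L w)) := (htA.div_const 2).sub htL
    apply le_of_tendsto ht
    filter_upwards [eventually_ge_atTop (2:ℝ)] with α hα
    have hαpos : (0:ℝ) ≤ α / 2 := by linarith
    have h1 := hbddM α (by linarith : (1:ℝ) < α)
    have h2 : 0 ≤ R (u α - b₀) (u α - b₀) := hR_pos _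
    simp only [hJdef] at h1
    nlinarith [mul_nonneg hαpos h2]
  -- K contains the segments from w
  have hseg : ∀ v ∈ K, ∀ t : ℝ, 0 ≤ t → t ≤ 1 → w + t • (v - w) ∈ K := by
    intro v hv t ht0 ht1
    have hvK := hv
    rw [hK] at hvK
    obtain ⟨hvp, hv0⟩ := hvK
    rw [hK]
    constructor
    · have heq : w + t • (v - w) = (1 - t) • w + t • v := by
        rw [smul_sub, sub_smul, one_smul]; abel
      rw [heq]
      exact hKpcv hwKp hvp (by linarith) ht0 (by ring)
    · have hxy : R (w - b₀) (v - b₀) = 0 := Rnull _ _ hRw0 hv0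
      have hyx : R (v - b₀) (w - b₀) = 0 := by rw [hR_symm]; exact hxy
      have hsub : v - w = (v - b₀) - (w - b₀) := by abel
      have hdd : R (v - w) (v - w) = 0 := by
        rw [hsub, expRsub, hRw0, hv0, hxy, hyx]; ring
      have hxd : R (w - b₀) (v - w) = 0 := by
        rw [hsub, map_sub (R (w - b₀)) (v - b₀) (w - b₀), hRw0, hxy]; ring
      have hdx : R (v - w) (w - b₀) = 0 := by rw [hR_symm]; exact hxd
      have heq2 : w + t • (v - w) - b₀ = (w - b₀) + t • (v - w) := by abel
      rw [heq2]
      simp only [map_add, map_smul, LinearMap.add_apply, LinearMap.smul_apply, smul_eq_mul]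
      rw [hRw0, hxd, hdx, hdd]; ring
  -- w satisfies the limit variational inequality
  have hVIw : ∀ v ∈ K, L (v - w) ≤ a w (v - w) := by
    intro v hv
    by_contra hcon
    push_neg at hcon
    obtain ⟨d, hd⟩ : ∃ d : V, d = v - w := ⟨_, rfl⟩
    rw [← hd] at hcon
    obtain ⟨c, hc⟩ : ∃ c : ℝ, c = a w d - L d := ⟨_, rfl⟩
    have hcneg : c < 0 := by rw [hc]; linarith
    obtain ⟨q, hq⟩ : ∃ q : ℝ, q = a d d := ⟨_, rfl⟩
    have hq0 : 0 ≤ q := by rw [hq]; exact ha_pos d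
    have hq1 : (0:ℝ) < q + 1 := by linarith
    obtain ⟨t, htdef⟩ : ∃ t : ℝ, t = min 1 ((-c) / (q + 1)) := ⟨_, rfl⟩
    have ht0 : 0 < t := by
      rw [htdef]; exact lt_min one_pos (div_pos (by linarith) hq1)
    have ht1 : t ≤ 1 := by rw [htdef]; exact min_le_left _ _
    have htq : t * (q + 1) ≤ -c := by
      have h : t ≤ (-c) / (q + 1) := by rw [htdef]; exact min_le_right _ _
      calc t * (q + 1) ≤ (-c) / (q + 1) * (q + 1) :=
            mul_le_mul_of_nonneg_right h (le_of_lt hq1)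
        _ = -c := by field_simp
    have hz : w + t • d ∈ K := by rw [hd]; exact hseg v hv t ht0.le ht1
    have hM1 := hMmin _ hz 2
    have hzb : R (w + t • d - b₀) (w + t • d - b₀) = 0 := by
      have h := hz; rw [hK] at h; exact h.2
    have hA : a (w + t • d) (w + t • d) = a w w + 2 * t * a w d + t * t * a d d := by
      have h := expA w (t • d)
      have h1 : a w (t • d) = t * a w d := by
        rw [map_smul, smul_eq_mul]
      have h2 : a (t • d) (t • d) = t * (t * a d d) := by
        simp only [map_smul, LinearMap.smul_apply, smul_eq_mul]
      rw [h, h1, h2]; ring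
    have hL2 : L (w + t • d) = L w + t * L d := by
      rw [map_add, map_smul, smul_eq_mul]
    simp only [hJdef, hzb] at hM1
    rw [hA, hL2] at hM1
    have hfin : 0 ≤ t * c + t * t / 2 * q := by
      rw [hc, hq]
      nlinarith [hJw, hM1]
    have hmul : t * c ≤ t * (-(t * (q + 1))) :=
      mul_le_mul_of_nonneg_left (by linarith) ht0.le
    nlinarith [mul_pos ht0 ht0]
  -- conclude by uniqueness
  have hweq : w = ulim := huniq w ⟨hwK, hVIw⟩
  rwa [hweq] at hw
end

section
/- Let H be a real Hilbert space, S_{h,α} : H → H a family of maps for parameters h > 0, α > 0, and S : H → H, satisfying: (i) ‖S_{h,α}(g)‖ ≤ C uniformly in h, α, g ranging over bounded sets; (ii) if g_{h,α} ⇀ g* weakly in H and (h,α) → (0,∞) then S_{h,α}(g_{h,α}) → S(g*) strongly in H. Define J_{h,α}(g) = (1/2)‖S_{h,α}(g)‖² + (M/2)‖g‖² and J(g) = (1/2)‖S(g)‖² + (M/2)‖g‖² with M > 0, and suppose J has a unique minimizer g_op. If g_{h,α} is a minimizer of J_{h,α} for each (h,α), then g_{h,α} → g_op strongly in H and S_{h,α}(g_{h,α})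 → S(g_op) strongly in H as (h,α) → (0,∞). -/
open scoped RealInnerProductSpace
open Filter

lemma weak_seq_compact {H : Type*} [NormedAddCommGroup H] [InnerProductSpace ℝ H]
    [CompleteSpace H] (u : ℕ → H) (R : ℝ) (hu : ∀ n, ‖u n‖ ≤ R) :
    ∃ (g : H) (φ : ℕ → ℕ), StrictMono φ ∧
      ∀ v : H, Tendsto (fun n => ⟪u (φ n), v⟫) atTop (nhds ⟪g, v⟫) := by
  classical
  have hR0 : 0 ≤ R := le_trans (norm_nonneg (u 0)) (hu 0)
  -- the Gram-type sequence in a compact metrizable product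
  set X := (ℕ → Set.Icc (-(R*R)) (R*R))
  have hmem : ∀ n m : ℕ, ⟪u n, u m⟫ ∈ Set.Icc (-(R*R)) (R*R) := by
    intro n m
    have h1 : |⟪u n, u m⟫| ≤ ‖u n‖ * ‖u m‖ := abs_real_inner_le_norm _ _
    have h2 : ‖u n‖ * ‖u m‖ ≤ R * R :=
      mul_le_mul (hu n) (hu m) (norm_nonneg _) hR0
    have := abs_le.mp (h1.trans h2)
    exact ⟨this.1, this.2⟩
  set F : ℕ → X := fun n m => ⟨⟪u n, u m⟫, hmem n m⟩ with hF
  obtain ⟨a, φ, hφ, hconv⟩ := SeqCompactSpace.tendsto_subseq F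
  have hptw : ∀ m : ℕ, Tendsto (fun n => ⟪u (φ n), u m⟫) atTop (nhds ((a m : ℝ))) := by
    intro m
    have := tendsto_pi_nhds.mp hconv m
    exact (continuous_subtype_val.tendsto (a m)).comp this
  -- the set of good test vectors
  set A : Set H := {v | ∃ r : ℝ, Tendsto (fun n => ⟪u (φ n), v⟫) atTop (nhds r)} with hA
  have hspan : ∀ v ∈ Submodule.span ℝ (Set.range u), v ∈ A := by
    intro v hv
    induction hv using Submodule.span_induction with
    | mem x hx => obtain ⟨m, rfl⟩ := hx; exact ⟨a m, hptw m⟩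
    | zero => exact ⟨0, by simpa using tendsto_const_nhds⟩
    | add x y _ _ hx hy =>
        obtain ⟨r, hr⟩ := hx; obtain ⟨s, hs⟩ := hy
        exact ⟨r + s, by simpa [inner_add_right] using hr.add hs⟩
    | smul c x _ hx =>
        obtain ⟨r, hr⟩ := hx
        exact ⟨c * r, by simpa [real_inner_smul_right] using hr.const_mul c⟩
  have hclos : ∀ v ∈ closure ((Submodule.span ℝ (Set.range u) : Submodule ℝ H) : Set H),
      v ∈ A := by
    intro v hv
    have hC : CauchySeq (fun n => ⟪u (φ n), v⟫) := by
      rw [Metric.cauchySeq_iff]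
      intro ε hε
      have hR1 : (0:ℝ) < R + 1 := by linarith
      obtain ⟨w, hw, hd⟩ := Metric.mem_closure_iff.mp hv (ε / (3 * (R + 1)))
        (by positivity)
      obtain ⟨r, hr⟩ := hspan w hw
      have hCw : CauchySeq (fun n => ⟪u (φ n), w⟫) := hr.cauchySeq
      obtain ⟨N, hN⟩ := Metric.cauchySeq_iff.mp hCw (ε / 3) (by positivity)
      refine ⟨N, fun m hm n hn => ?_⟩
      have key : ∀ k, |⟪u (φ k), v⟫ - ⟪u (φ k), w⟫| ≤ R * (ε / (3 * (R + 1))) := by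
        intro k
        have : ⟪u (φ k), v⟫ - ⟪u (φ k), w⟫ = ⟪u (φ k), v - w⟫ := by
          rw [inner_sub_right]
        rw [this]
        calc |⟪u (φ k), v - w⟫| ≤ ‖u (φ k)‖ * ‖v - w‖ := abs_real_inner_le_norm _ _
          _ ≤ R * (ε / (3 * (R + 1))) := by
              apply mul_le_mul (hu _) ?_ (norm_nonneg _) hR0
              rw [← dist_eq_norm]; exact le_of_lt hd
      have hRe : R * (ε / (3 * (R + 1))) < ε / 3 := by
        have h6 : R * (ε / (3 * (R + 1))) = R * ε / (3 * (R + 1)) := by ring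
        rw [h6, div_lt_div_iff₀ (by positivity) (by norm_num : (0:ℝ) < 3)]
        nlinarith
      have h1 := key m; have h2 := key n
      have h3 := hN m hm n hn
      rw [Real.dist_eq] at h3 ⊢
      calc |⟪u (φ m), v⟫ - ⟪u (φ n), v⟫|
          ≤ |⟪u (φ m), v⟫ - ⟪u (φ m), w⟫| + |⟪u (φ m), w⟫ - ⟪u (φ n), w⟫|
            + |⟪u (φ n), w⟫ - ⟪u (φ n), v⟫| := by
            have := abs_sub_le (⟪u (φ m), v⟫) (⟪u (φ m), w⟫) (⟪u (φ n), v⟫)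
            have h4 := abs_sub_le (⟪u (φ m), w⟫) (⟪u (φ n), w⟫) (⟪u (φ n), v⟫)
            linarith
        _ < ε := by
            have h5 : |⟪u (φ n), w⟫ - ⟪u (φ n), v⟫| = |⟪u (φ n), v⟫ - ⟪u (φ n), w⟫| :=
              abs_sub_comm _ _
            rw [h5]; linarith
    exact cauchySeq_tendsto_of_complete hC
  -- every vector is good, via orthogonal projection onto the closed span
  set K := (Submodule.span ℝ (Set.range u)).topologicalClosure with hK
  haveI : CompleteSpace K :=
    (Submodule.span ℝ (Set.range u)).isClosed_topologicalClosure.completeSpace_coe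
  have key : ∀ v : H, ∃ r : ℝ, Tendsto (fun n => ⟪u (φ n), v⟫) atTop (nhds r) := by
    intro v
    have huK : ∀ n, u n ∈ K :=
      fun n => Submodule.le_topologicalClosure _ (Submodule.subset_span ⟨n, rfl⟩)
    have hPv : ((K.orthogonalProjectionOnto v : H)) ∈ A := by
      apply hclos
      rw [← Submodule.topologicalClosure_coe]
      exact (K.orthogonalProjectionOnto v).2
    obtain ⟨r, hr⟩ := hPv
    refine ⟨r, ?_⟩
    have heq : ∀ n, ⟪u (φ n), v⟫ = ⟪u (φ n), (K.orthogonalProjectionOnto v : H)⟫ := by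
      intro n
      have h0 : ⟪u (φ n), v - K.orthogonalProjectionOnto v⟫ = 0 :=
        Submodule.inner_right_of_mem_orthogonal (huK (φ n))
          (K.sub_starProjection_mem_orthogonal v)
      rw [inner_sub_right] at h0
      linarith
    simpa only [heq] using hr
  -- build the limit functional and apply Riesz representation
  set L : H → ℝ := fun v => Classical.choose (key v) with hL
  have hLt : ∀ v, Tendsto (fun n => ⟪u (φ n), v⟫) atTop (nhds (L v)) :=
    fun v => Classical.choose_spec (key v)
  have hadd : ∀ x y : H, L (x + y) = L x + L y := by
    intro x y
    refine tendsto_nhds_unique (hLt (x + y)) ?_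
    simpa [inner_add_right] using (hLt x).add (hLt y)
  have hsmul : ∀ (c : ℝ) (x : H), L (c • x) = c * L x := by
    intro c x
    refine tendsto_nhds_unique (hLt (c • x)) ?_
    simpa [real_inner_smul_right] using (hLt x).const_mul c
  have hbound : ∀ v : H, ‖L v‖ ≤ R * ‖v‖ := by
    intro v
    have h1 : Tendsto (fun n => |⟪u (φ n), v⟫|) atTop (nhds |L v|) := (hLt v).abs
    have h2 : ∀ n, |⟪u (φ n), v⟫| ≤ R * ‖v‖ := fun n =>
      (abs_real_inner_le_norm _ _).trans
        (mul_le_mul_of_nonneg_right (hu _) (norm_nonneg _))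
    have := le_of_tendsto h1 (Eventually.of_forall h2)
    simpa using this
  set ℓ : H →L[ℝ] ℝ :=
    LinearMap.mkContinuous
      { toFun := L, map_add' := hadd, map_smul' := hsmul } R hbound with hℓ
  refine ⟨(InnerProductSpace.toDual ℝ H).symm ℓ, φ, hφ, fun v => ?_⟩
  have : ⟪(InnerProductSpace.toDual ℝ H).symm ℓ, v⟫ = ℓ v :=
    InnerProductSpace.toDual_symm_apply
  rw [this]
  exact hLt v


/-- Double convergence `(h, α) → (0⁺, ∞)` of the discrete optimal controls and
optimal states to the continuous ones (abstract form of Theorem 3.6). -/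
theorem stmt19 {H : Type*} [NormedAddCommGroup H] [InnerProductSpace ℝ H] [CompleteSpace H]
    (Shα : ℝ × ℝ → H → H) (S : H → H) (M : ℝ) (hM : 0 < M)
    (l : Filter (ℝ × ℝ)) (hl : l = (nhdsWithin 0 (Set.Ioi 0)) ×ˢ atTop)
    (hbdd : ∀ B : ℝ, ∃ C : ℝ, ∀ (p : ℝ × ℝ) (g : H), ‖g‖ ≤ B → ‖Shα p g‖ ≤ C)
    (hstate : ∀ (g : ℝ × ℝ → H) (gs : H),
      (∀ v : H, Tendsto (fun p => ⟪g p, v⟫) l (nhds ⟪gs, v⟫)) →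
      Tendsto (fun p => Shα p (g p)) l (nhds (S gs)))
    (Jhα : ℝ × ℝ → H → ℝ)
    (hJhα : ∀ (p : ℝ × ℝ) (g : H), Jhα p g = 1 / 2 * ‖Shα p g‖ ^ 2 + M / 2 * ‖g‖ ^ 2)
    (J : H → ℝ) (hJ : ∀ g : H, J g = 1 / 2 * ‖S g‖ ^ 2 + M / 2 * ‖g‖ ^ 2)
    (gop : H) (hgop : ∀ g : H, J gop ≤ J g)
    (hgopuniq : ∀ g' : H, (∀ g : H, J g' ≤ J g) → g' = gop)
    (gmin : ℝ × ℝ → H)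
    (hgmin : ∀ (p : ℝ × ℝ) (g : H), Jhα p (gmin p) ≤ Jhα p g) :
    Tendsto gmin l (nhds gop) ∧
    Tendsto (fun p => Shα p (gmin p)) l (nhds (S gop)) := by
  classical
  have hlcg : l.IsCountablyGenerated := by rw [hl]; infer_instance
  -- uniform bound on the minimizers
  obtain ⟨C, hC⟩ := hbdd ‖gop‖
  set D : ℝ := 1/2 * C^2 + M/2 * ‖gop‖^2 with hD
  have hDb : ∀ p, M/2 * ‖gmin p‖^2 ≤ D := by
    intro p
    have h1 := hgmin p gop
    rw [hJhα, hJhα] at h1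
    have h2 : ‖Shα p gop‖ ≤ C := hC p gop le_rfl
    nlinarith [sq_nonneg (‖Shα p (gmin p)‖), norm_nonneg (Shα p gop)]
  set R : ℝ := Real.sqrt (2*D/M) with hR
  have hgb : ∀ p, ‖gmin p‖ ≤ R := by
    intro p
    have h1 : ‖gmin p‖^2 ≤ 2*D/M := by
      rw [le_div_iff₀ hM]
      calc ‖gmin p‖^2 * M = 2 * (M/2 * ‖gmin p‖^2) := by ring
        _ ≤ 2*D := by linarith [hDb p]
    calc ‖gmin p‖ = Real.sqrt (‖gmin p‖^2) := (Real.sqrt_sq (norm_nonneg _)).symm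
      _ ≤ R := Real.sqrt_le_sqrt h1
  -- convergence at the fixed control gop
  have hSgop : Tendsto (fun p => Shα p gop) l (nhds (S gop)) :=
    hstate (fun _ => gop) gop (fun v => tendsto_const_nhds)
  have hJgopconv : Tendsto (fun p => Jhα p gop) l (nhds (J gop)) := by
    simp only [hJhα, hJ]
    exact ((hSgop.norm.pow 2).const_mul _).add tendsto_const_nhds
  -- l avoids any fixed point eventually
  have hne : ∀ q : ℝ × ℝ, ∀ᶠ p in l, p ≠ q := by
    intro q
    rw [hl]
    have h2 : ∀ᶠ b in (atTop : Filter ℝ), b ≠ q.2 := eventually_ne_atTop q.2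
    exact (h2.prod_inr _).mono (fun p hp hq => hp (by rw [hq]))
  have main : Tendsto gmin l (nhds gop) := by
    rw [tendsto_iff_seq_tendsto]
    intro x hx
    apply tendsto_of_subseq_tendsto
    intro ns hns
    have hy : Tendsto (fun n => x (ns n)) atTop l := hx.comp hns
    obtain ⟨g', φ, hφ, hw⟩ := weak_seq_compact (fun n => gmin (x (ns n))) R
      (fun n => hgb _)
    refine ⟨φ, ?_⟩
    set z : ℕ → ℝ × ℝ := fun n => x (ns (φ n)) with hz
    have hzl : Tendsto z atTop l := hy.comp hφ.tendsto_atTop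
    have hw' : ∀ v : H, Tendsto (fun n => ⟪gmin (z n), v⟫) atTop (nhds ⟪g', v⟫) :=
      fun v => hw v
    set G : ℝ × ℝ → H := fun p => if p ∈ Set.range z then gmin p else g' with hG
    have hGweak : ∀ v : H, Tendsto (fun p => ⟪G p, v⟫) l (nhds ⟪g', v⟫) := by
      intro v
      rw [Metric.tendsto_nhds]
      intro ε hε
      obtain ⟨N, hN⟩ := Metric.tendsto_atTop.mp (hw' v) ε hε
      have hev : ∀ᶠ p in l, ∀ k ∈ Finset.range N, p ≠ z k :=
        (Filter.eventually_all_finset _).mpr (fun k _ => hne (z k))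
      refine hev.mono (fun p hp => ?_)
      by_cases hmem : p ∈ Set.range z
      · obtain ⟨m, hm⟩ := hmem
        have hmN : N ≤ m := by
          by_contra h
          exact hp m (Finset.mem_range.mpr (not_le.mp h)) hm.symm
        have hGp : G p = gmin (z m) := by
          show (if p ∈ Set.range z then gmin p else g') = gmin (z m)
          rw [if_pos ⟨m, hm⟩, ← hm]
        rw [hGp]
        exact hN m hmN
      · have hGp : G p = g' := if_neg hmem
        rw [hGp]; simpa using hε
    have hSz := (hstate G g' hGweak).comp hzl
    have hSz' : Tendsto (fun n => Shα (z n) (gmin (z n))) atTop (nhds (S g')) := by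
      have hGz : ∀ n, G (z n) = gmin (z n) := fun n => if_pos ⟨n, rfl⟩
      simpa only [Function.comp_def, hGz] using hSz
    have ha : Tendsto (fun n => 1/2 * ‖Shα (z n) (gmin (z n))‖^2) atTop
        (nhds (1/2 * ‖S g'‖^2)) := (hSz'.norm.pow 2).const_mul _
    have hd : Tendsto (fun n => Jhα (z n) gop) atTop (nhds (J gop)) :=
      hJgopconv.comp hzl
    have hc : Tendsto (fun n => ⟪gmin (z n), g'⟫) atTop (nhds (‖g'‖^2)) := by
      have := hw' g'
      rwa [real_inner_self_eq_norm_sq] at this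
    set e : ℕ → ℝ := fun n => (Jhα (z n) gop - 1/2 * ‖Shα (z n) (gmin (z n))‖^2
        - M * ⟪gmin (z n), g'⟫) + M/2 * ‖g'‖^2 with he
    have helim : Tendsto e atTop (nhds (J gop - J g')) := by
      have h1 := ((hd.sub ha).sub (hc.const_mul M)).add
        (tendsto_const_nhds (α := ℕ) (x := M/2 * ‖g'‖^2))
      have h2 : J gop - J g' = (J gop - 1/2 * ‖S g'‖^2 - M * ‖g'‖^2) + M/2 * ‖g'‖^2 := by
        rw [hJ g']; ring
      rw [h2]
      exact h1
    have hemin : ∀ n, M/2 * ‖gmin (z n) - g'‖^2 ≤ e n := by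
      intro n
      have h1 : ‖gmin (z n) - g'‖^2
          = ‖gmin (z n)‖^2 - 2*⟪gmin (z n), g'⟫ + ‖g'‖^2 := norm_sub_sq_real _ _
      have h2 : 1/2 * ‖Shα (z n) (gmin (z n))‖^2 + M/2 * ‖gmin (z n)‖^2
          ≤ Jhα (z n) gop := by
        rw [← hJhα]; exact hgmin _ _
      have h3 : M/2 * ‖gmin (z n) - g'‖^2
          = M/2 * ‖gmin (z n)‖^2 - M * ⟪gmin (z n), g'⟫ + M/2 * ‖g'‖^2 := by
        rw [h1]; ring
      rw [he]
      simp only []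
      linarith
    have hT0 : 0 ≤ J gop - J g' :=
      ge_of_tendsto helim (Eventually.of_forall fun n =>
        le_trans (by positivity) (hemin n))
    have hg'eq : g' = gop := by
      apply hgopuniq
      intro g
      have := hgop g
      linarith [hgop g']
    have hezero : Tendsto e atTop (nhds 0) := by
      have : J gop - J g' = 0 := by rw [hg'eq]; ring
      rwa [this] at helim
    have hsq : Tendsto (fun n => M/2 * ‖gmin (z n) - g'‖^2) atTop (nhds 0) :=
      squeeze_zero (fun n => by positivity) hemin hezero
    have hsq2 : Tendsto (fun n => ‖gmin (z n) - g'‖^2) atTop (nhds 0) := by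
      have h1 := hsq.const_mul (2/M)
      have hM' : M ≠ 0 := ne_of_gt hM
      simp only [mul_zero] at h1
      convert h1 using 2 with n
      field_simp
    have hnrm : Tendsto (fun n => ‖gmin (z n) - g'‖) atTop (nhds 0) := by
      have h3 := (Real.continuous_sqrt.tendsto 0).comp hsq2
      simp only [Function.comp_def, Real.sqrt_zero] at h3
      convert h3 using 2 with n
      rw [Real.sqrt_sq (norm_nonneg _)]
    rw [← hg'eq]
    rw [tendsto_iff_norm_sub_tendsto_zero]
    exact hnrm
  refine ⟨main, ?_⟩
  exact hstate gmin gop (fun v => main.inner tendsto_const_nhds)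
end
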